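/- Let n ≥ 1, 1 < p < ∞, and q > p − 1. Let f : ℝⁿ → ℝ be a nonnegative C² convex function which has p-finite growth with exponent q, i.e. liminf_{r→∞} r^{−p} ∫_{B(0,r)} f(x)^q dx < ∞. Then f is constant. (Theorem 5.1, Liouville Type Theorem for Convex Functions, in the Euclidean case — ℝⁿ being a complete noncompact Riemannian manifold.) -/

import Mathlib

open MeasureTheory Filter Metric Real

/-- Theorem 5.1, Liouville Type Theorem for Convex Functions,
Euclidean case, with `p`-finite growth.  Let `1 < p`, `q > p − 1`, and let
`f : ℝⁿ → ℝ` be a nonnegative `C²` convex function with `p`-finite growth with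
exponent `q`: `liminf_{r→∞} r^{−p} ∫_{B(0,r)} f^q < ∞`, expressed as the
existence of a bound `C` attained along arbitrarily large radii (`∃ᶠ`).
Then `f` is constant. -/
theorem liouville_convex_p_finite
    (n : ℕ) (hn : 1 ≤ n) (p q : ℝ) (hp : 1 < p) (hq : p - 1 < q)
    (f : EuclideanSpace ℝ (Fin n) → ℝ)
    (hf : ContDiff ℝ 2 f)
    (hconv : ConvexOn ℝ Set.univ f)
    (hf0 : ∀ x, 0 ≤ f x)
    (hfinite : ∃ C : ℝ, ∃ᶠ r in atTop,
      (1 / r ^ p) * ∫ x in ball (0 : EuclideanSpace ℝ (Fin n)) r, f x ^ q ≤ C) :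
    ∃ c : ℝ, ∀ x, f x = c := by
  by_contra hcon
  push_neg at hcon
  obtain ⟨b0, hb0⟩ := hcon (f 0)
  obtain ⟨a, b, hab⟩ : ∃ a b : EuclideanSpace ℝ (Fin n), f a < f b := by
    rcases lt_or_gt_of_ne hb0 with h | h
    · exact ⟨b0, 0, h⟩
    · exact ⟨0, b0, h⟩
  set δ := f b - f a with hδdef
  have hδ : 0 < δ := sub_pos.mpr hab
  have hfc : Continuous f := hf.continuous
  have hq0 : 0 < q := by linarith
  obtain ⟨ε, hε, hballf⟩ : ∃ ε > 0, ∀ z ∈ ball b ε, f a + δ / 2 ≤ f z := by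
    have hop : IsOpen {z : EuclideanSpace ℝ (Fin n) | f a + δ / 2 < f z} := isOpen_lt continuous_const hfc
    have hbmem : b ∈ {z : EuclideanSpace ℝ (Fin n) | f a + δ / 2 < f z} := by
      simp only [Set.mem_setOf_eq]; linarith
    obtain ⟨ε, hε, hsub⟩ := Metric.isOpen_iff.mp hop b hbmem
    exact ⟨ε, hε, fun z hz => (hsub hz).le⟩
  set M := ‖b - a‖ + ε with hM
  have hM0 : 0 < M := by positivity
  -- key pointwise lower bound on a ball of radius proportional to r
  have key : ∀ r : ℝ, 2 * M + 2 * ‖a‖ + 2 ≤ r →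
      ∀ w ∈ ball (a + (r / (2 * M)) • (b - a)) (r / (2 * M) * ε),
        δ / (4 * M) * r ≤ f w := by
    intro r hr w hw
    have hr0 : 0 < r := by nlinarith [norm_nonneg a]
    set t := r / (2 * M) with htdef
    have ht1 : 1 ≤ t := by
      rw [htdef, le_div_iff₀ (by linarith)]
      nlinarith [norm_nonneg a]
    have ht0 : 0 < t := lt_of_lt_of_le one_pos ht1
    set z := a + t⁻¹ • (w - a) with hzdef
    have hzb : z ∈ ball b ε := by
      have hzb' : z - b = t⁻¹ • (w - (a + t • (b - a))) := by
        rw [hzdef]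
        match_scalars <;> field_simp <;> ring
      rw [mem_ball, dist_eq_norm, hzb', norm_smul, norm_inv, Real.norm_eq_abs,
        abs_of_pos ht0]
      have h1 : ‖w - (a + t • (b - a))‖ < t * ε := by
        rw [← dist_eq_norm]
        exact mem_ball.mp hw
      calc t⁻¹ * ‖w - (a + t • (b - a))‖ < t⁻¹ * (t * ε) := by
            exact mul_lt_mul_of_pos_left h1 (inv_pos.mpr ht0)
        _ = ε := by field_simp
    have hcomb : (1 - t⁻¹) • a + t⁻¹ • w = z := by
      rw [hzdef]; module
    have h2 : f z ≤ (1 - t⁻¹) * f a + t⁻¹ * f w := by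
      have := hconv.2 (Set.mem_univ a) (Set.mem_univ w)
        (sub_nonneg.mpr (inv_le_one_of_one_le₀ ht1)) (inv_nonneg.mpr ht0.le) (by ring)
      rw [hcomb, smul_eq_mul, smul_eq_mul] at this
      exact this
    have h3 : f a + δ / 2 ≤ f z := hballf z hzb
    have h5 : t * f z ≤ (t - 1) * f a + f w := by
      have e1 : t * ((1 - t⁻¹) * f a + t⁻¹ * f w) = (t - 1) * f a + f w := by
        field_simp
      calc t * f z ≤ t * ((1 - t⁻¹) * f a + t⁻¹ * f w) :=
            mul_le_mul_of_nonneg_left h2 ht0.le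
        _ = (t - 1) * f a + f w := e1
    have h6 : t * (f a + δ / 2) ≤ t * f z := mul_le_mul_of_nonneg_left h3 ht0.le
    have h4 : t * (δ / 2) ≤ f w := by
      have e3 : t * (f a + δ / 2) = t * f a + t * (δ / 2) := by ring
      have e4 : (t - 1) * f a = t * f a - f a := by ring
      have := hf0 a
      linarith
    calc δ / (4 * M) * r = t * (δ / 2) := by rw [htdef]; field_simp; ring
      _ ≤ f w := h4
  -- integrability and volume facts
  obtain ⟨C, hC⟩ := hfinite
  have hcont_q : Continuous fun x : EuclideanSpace ℝ (Fin n) => f x ^ q :=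
    hfc.rpow_const fun x => Or.inr hq0.le
  have hint : ∀ r : ℝ, IntegrableOn (fun x : EuclideanSpace ℝ (Fin n) => f x ^ q) (ball 0 r) volume :=
    fun r => (hcont_q.continuousOn.integrableOn_compact
      (isCompact_closedBall (0 : EuclideanSpace ℝ (Fin n)) r)).mono_set ball_subset_closedBall
  set v₁ := (volume (ball (0 : EuclideanSpace ℝ (Fin n)) 1)).toReal with hv₁
  have hv₁pos : 0 < v₁ :=
    ENNReal.toReal_pos (measure_ball_pos volume 0 one_pos).ne' measure_ball_lt_top.ne
  have hfinrank : Module.finrank ℝ (EuclideanSpace ℝ (Fin n)) = n := finrank_euclideanSpace_fin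
  set K := (δ / (4 * M)) ^ q * ((ε / (2 * M)) ^ n * v₁) with hK
  have hKpos : 0 < K := by
    have h1 : (0:ℝ) < (δ / (4 * M)) ^ q := rpow_pos_of_pos (by positivity) q
    positivity
  -- the main lower bound for the averaged integral
  have hlow : ∀ r : ℝ, 2 * M + 2 * ‖a‖ + 2 ≤ r →
      K * r ^ (q + (n : ℝ) - p) ≤
        (1 / r ^ p) * ∫ x in ball (0 : EuclideanSpace ℝ (Fin n)) r, f x ^ q := by
    intro r hr
    have hr0 : 0 < r := by nlinarith [norm_nonneg a]
    set c := a + (r / (2 * M)) • (b - a) with hc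
    set ρ := r / (2 * M) * ε with hρ
    have hρ0 : 0 < ρ := by positivity
    have hsub : ball c ρ ⊆ ball (0 : EuclideanSpace ℝ (Fin n)) r := by
      intro w hw
      rw [mem_ball] at hw ⊢
      have h1 : dist w 0 ≤ dist w c + dist c 0 := dist_triangle _ _ _
      have hcnorm : dist c 0 ≤ ‖a‖ + r / (2 * M) * ‖b - a‖ := by
        rw [dist_zero_right, hc]
        calc ‖a + (r / (2 * M)) • (b - a)‖ ≤ ‖a‖ + ‖(r / (2 * M)) • (b - a)‖ :=
              norm_add_le _ _
          _ = ‖a‖ + r / (2 * M) * ‖b - a‖ := by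
              rw [norm_smul, Real.norm_eq_abs, abs_of_pos (by positivity)]
      have he : r / (2 * M) * ‖b - a‖ + ρ = r / 2 := by
        rw [hρ, hM]; field_simp
      have ha2 : ‖a‖ ≤ r / 2 := by nlinarith [norm_nonneg a]
      linarith
    have hpt : ∀ w ∈ ball c ρ, δ / (4 * M) * r ≤ f w := key r hr
    have h1 : (δ / (4 * M) * r) ^ q * (volume (ball c ρ)).toReal ≤
        ∫ x in ball c ρ, f x ^ q := by
      apply setIntegral_ge_of_const_le_real measurableSet_ball measure_ball_lt_top.ne
      · intro x hx
        exact Real.rpow_le_rpow (by positivity) (hpt x hx) hq0.le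
      · exact (hint r).mono_set hsub
    have h2 : ∫ x in ball c ρ, f x ^ q ≤ ∫ x in ball (0 : EuclideanSpace ℝ (Fin n)) r, f x ^ q :=
      setIntegral_mono_set (hint r)
        (Filter.Eventually.of_forall fun x => Real.rpow_nonneg (hf0 x) q)
        (HasSubset.Subset.eventuallyLE hsub)
    have hvol : (volume (ball c ρ)).toReal = ρ ^ n * v₁ := by
      rw [Measure.addHaar_ball_of_pos volume c hρ0, hfinrank, ENNReal.toReal_mul,
        ENNReal.toReal_ofReal (by positivity)]
    have h3 : (δ / (4 * M) * r) ^ q * (ρ ^ n * v₁) ≤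
        ∫ x in ball (0 : EuclideanSpace ℝ (Fin n)) r, f x ^ q := by
      rw [← hvol]; exact h1.trans h2
    have hrp : (0:ℝ) < r ^ p := rpow_pos_of_pos hr0 p
    have halg : K * r ^ (q + (n : ℝ) - p) * r ^ p =
        (δ / (4 * M) * r) ^ q * (ρ ^ n * v₁) := by
      rw [Real.mul_rpow (by positivity) hr0.le]
      have eρ : ρ ^ n = (ε / (2 * M)) ^ n * r ^ n := by
        rw [hρ, ← mul_pow]; ring_nf
      have e2 : r ^ (q + (n : ℝ) - p) * r ^ p = r ^ q * r ^ (n : ℕ) := by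
        rw [← Real.rpow_natCast r n, ← Real.rpow_add hr0, ← Real.rpow_add hr0]
        ring_nf
      rw [hK, eρ, mul_assoc, e2]
      ring
    calc K * r ^ (q + (n : ℝ) - p)
        = K * r ^ (q + (n : ℝ) - p) * r ^ p / r ^ p := by field_simp
      _ = (δ / (4 * M) * r) ^ q * (ρ ^ n * v₁) / r ^ p := by rw [halg]
      _ ≤ (∫ x in ball (0 : EuclideanSpace ℝ (Fin n)) r, f x ^ q) / r ^ p := by
          gcongr
      _ = (1 / r ^ p) * ∫ x in ball (0 : EuclideanSpace ℝ (Fin n)) r, f x ^ q := by ring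
  -- conclude: frequently bounded vs. growing lower bound
  have hexp : 0 < q + (n : ℝ) - p := by
    have h1 : (1:ℝ) ≤ n := by exact_mod_cast hn
    linarith
  have htend : Tendsto (fun r : ℝ => K * r ^ (q + (n : ℝ) - p)) atTop atTop :=
    Tendsto.const_mul_atTop hKpos (tendsto_rpow_atTop hexp)
  have hev : ∀ᶠ r in atTop,
      2 * M + 2 * ‖a‖ + 2 ≤ r ∧ C < K * r ^ (q + (n : ℝ) - p) :=
    (eventually_ge_atTop _).and (htend.eventually_gt_atTop C)
  obtain ⟨r, hCr, hr1, hr2⟩ := (hC.and_eventually hev).exists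
  exact absurd hCr (not_le.mpr (lt_of_lt_of_le hr2 (hlow r hr1)))
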